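/- Existence of S-primary decomposition: Let L be an S-Noetherian r-lattice. Then every proper element a of L with t ≰ a for all t ∈ S can be written as a finite meet of S-primary elements. -/

import Mathlib

open CompleteLattice

class MulLattice (L : Type*) extends CompleteLattice L, CommMonoid L where
  mul_sSup : ∀ (a : L) (s : Set L), a * sSup s = ⨆ b ∈ s, a * b
  one_eq_top : (1 : L) = ⊤

variable {L : Type*} [MulLattice L]

/-- Residual `(a : b)`. -/
def mres (a b : L) : L := sSup {x : L | x * b ≤ a}

/-- Lattice-theoretic radical. -/
def rad (a : L) : L :=
  sSup {x : L | IsCompactElement x ∧ ∃ n : ℕ, 0 < n ∧ x ^ n ≤ a}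

def IsMeetPrincipal (m : L) : Prop :=
  ∀ a b : L, a ⊓ m * b = m * (mres a m ⊓ b)

def IsJoinPrincipal (m : L) : Prop :=
  ∀ a b : L, a ⊔ mres b m = mres (a * m ⊔ b) m

def IsPrincipal (m : L) : Prop := IsMeetPrincipal m ∧ IsJoinPrincipal m

/-- A multiplicatively closed subset of compact elements with `1 ∈ S`, `0 ∉ S`. -/
def MultClosed (S : Set L) : Prop :=
  (∀ s ∈ S, IsCompactElement s) ∧ (1 : L) ∈ S ∧ (⊥ : L) ∉ S ∧
    ∀ s ∈ S, ∀ t ∈ S, s * t ∈ S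

def SCompact (S : Set L) (a : L) : Prop :=
  ∃ s ∈ S, ∃ b : L, IsCompactElement b ∧ s * a ≤ b ∧ b ≤ a

def SPrime (S : Set L) (p : L) : Prop :=
  p ≠ ⊤ ∧ (∀ t ∈ S, ¬ t ≤ p) ∧
    ∃ s ∈ S, ∀ a b : L, a * b ≤ p → s * a ≤ p ∨ s * b ≤ p

def SPrimary (S : Set L) (q : L) : Prop :=
  q ≠ ⊤ ∧ (∀ t ∈ S, ¬ t ≤ q) ∧
    ∃ s ∈ S, ∀ c d : L, c * d ≤ q → s * c ≤ q ∨ s * d ≤ rad q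

def Ssat (S : Set L) (a : L) : L := sSup {x : L | ∃ s ∈ S, s * x ≤ a}

class RLattice (L : Type*) extends MulLattice L where
  modular : ∀ a b c : L, a ≤ c → a ⊔ (b ⊓ c) = (a ⊔ b) ⊓ c
  principally_generated : ∀ a : L, a = sSup {m : L | IsPrincipal m ∧ m ≤ a}
  compactly_generated : ∀ a : L, a = sSup {c : L | IsCompactElement c ∧ c ≤ a}
  top_compact : IsCompactElement (⊤ : L)

class CLattice (L : Type*) extends MulLattice L where
  compactly_generated : ∀ a : L, a = sSup {c : L | IsCompactElement c ∧ c ≤ a}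
  top_compact : IsCompactElement (⊤ : L)
  compact_mul : ∀ a b : L, IsCompactElement a → IsCompactElement b →
    IsCompactElement (a * b)


namespace Stmt17

variable {L : Type*} [RLattice L]

lemma mul_sup' (a b c : L) : a * (b ⊔ c) = a * b ⊔ a * c := by
  have : (b ⊔ c) = sSup {b, c} := by simp [sSup_insert]
  rw [this, MulLattice.mul_sSup, iSup_pair]

lemma mul_mono_right {b c : L} (a : L) (h : b ≤ c) : a * b ≤ a * c := by
  have : a * c = a * b ⊔ a * c := by rw [← mul_sup', sup_eq_right.2 h]
  rw [this]; exact le_sup_left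

lemma mul_mono_left {b c : L} (h : b ≤ c) (a : L) : b * a ≤ c * a := by
  rw [mul_comm b a, mul_comm c a]; exact mul_mono_right a h

lemma mul_top' (a : L) : a * ⊤ = a := by
  rw [← MulLattice.one_eq_top, mul_one]

lemma mul_le_left (a b : L) : a * b ≤ a := by
  calc a * b ≤ a * ⊤ := mul_mono_right a le_top
  _ = a := mul_top' a

lemma mul_le_right (a b : L) : a * b ≤ b := by
  rw [mul_comm]; exact mul_le_left b a

lemma mul_le_inf (a b : L) : a * b ≤ a ⊓ b :=
  le_inf (mul_le_left a b) (mul_le_right a b)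

lemma pow_mono {x m : L} (h : x ≤ m) : ∀ n : ℕ, x ^ n ≤ m ^ n := by
  intro n; induction n with
  | zero => simp
  | succ n ih =>
    rw [pow_succ, pow_succ]
    exact le_trans (mul_mono_right _ h) (mul_mono_left ih m)

lemma pow_le_self (x : L) {n : ℕ} (h : 0 < n) : x ^ n ≤ x := by
  cases n with
  | zero => exact absurd h (by simp)
  | succ k => rw [pow_succ]; exact mul_le_right _ x

/-! ### Residuation -/

lemma mres_mul_le (a b : L) : mres a b * b ≤ a := by
  rw [mres, mul_comm, MulLattice.mul_sSup]
  apply iSup_le; intro x; apply iSup_le; intro hx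
  rw [mul_comm]; exact hx

lemma le_mres_iff {x a b : L} : x ≤ mres a b ↔ x * b ≤ a := by
  constructor
  · intro h; exact le_trans (mul_mono_left h b) (mres_mul_le a b)
  · intro h; exact le_sSup h

lemma mres_mres (a m n : L) : mres (mres a m) n = mres a (m * n) := by
  apply le_antisymm
  · rw [le_mres_iff, mul_comm m n, ← mul_assoc]
    exact le_trans (mul_mono_left (mres_mul_le _ _) m) (mres_mul_le a m)
  · rw [le_mres_iff, le_mres_iff, mul_assoc, mul_comm n m]
    exact mres_mul_le _ _

lemma le_mres_self (a b : L) : a ≤ mres a b := le_mres_iff.2 (mul_le_left a b)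

lemma mres_top (a : L) : mres a (⊤ : L) = a := by
  apply le_antisymm
  · rw [mres]; apply _root_.sSup_le; intro x hx
    simpa [mul_top'] using hx
  · exact le_mres_self a ⊤

/-! ### Meet-principal elements -/

lemma mp_top : IsMeetPrincipal (⊤ : L) := by
  intro a b
  rw [← MulLattice.one_eq_top, one_mul, one_mul, MulLattice.one_eq_top, mres_top]

lemma mp_mul {m n : L} (hm : IsMeetPrincipal m) (hn : IsMeetPrincipal n) :
    IsMeetPrincipal (m * n) := by
  intro a b
  rw [mul_assoc, hm a (n * b), hn (mres a m) b, ← mul_assoc, ← mres_mres]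

lemma mp_pow {m : L} (hm : IsMeetPrincipal m) : ∀ n : ℕ, IsMeetPrincipal (m ^ n) := by
  intro n; induction n with
  | zero => rw [pow_zero, MulLattice.one_eq_top]; exact mp_top
  | succ n ih => rw [pow_succ]; exact mp_mul ih hm

/-! ### Saturation -/

variable (S : Set L)

def admissible (a : L) : Prop := ∀ t ∈ S, ¬ t ≤ a

variable {S}

lemma le_Ssat_of {s x a : L} (hs : s ∈ S) (h : s * x ≤ a) : x ≤ Ssat S a :=
  le_sSup ⟨s, hs, h⟩

lemma le_Ssat (hS : MultClosed S) (a : L) : a ≤ Ssat S a :=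
  le_Ssat_of hS.2.1 (by rw [one_mul])

lemma Ssat_mono {a b : L} (h : a ≤ b) : Ssat S a ≤ Ssat S b := by
  apply _root_.sSup_le; rintro x ⟨s, hs, hsx⟩
  exact le_Ssat_of hs (le_trans hsx h)

lemma Ssat_directed (hS : MultClosed S) (a : L) :
    DirectedOn (· ≤ ·) {x : L | ∃ s ∈ S, s * x ≤ a} := by
  rintro x ⟨s, hs, hsx⟩ y ⟨t, ht, hty⟩
  refine ⟨x ⊔ y, ⟨s * t, hS.2.2.2 s hs t ht, ?_⟩, le_sup_left, le_sup_right⟩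
  rw [mul_sup']
  apply sup_le
  · calc s * t * x = t * (s * x) := by rw [mul_comm s t, mul_assoc]
    _ ≤ s * x := mul_le_right t _
    _ ≤ a := hsx
  · calc s * t * y = s * (t * y) := by rw [mul_assoc]
    _ ≤ t * y := mul_le_right s _
    _ ≤ a := hty

lemma sat_mul (hS : MultClosed S) (hN : ∀ x : L, SCompact S x) (a : L) :
    ∃ s ∈ S, s * Ssat S a ≤ a := by
  obtain ⟨s, hs, b, hbc, hsb, hba⟩ := hN (Ssat S a)
  have hne : ({x : L | ∃ s ∈ S, s * x ≤ a}).Nonempty :=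
    ⟨⊥, 1, hS.2.1, by rw [one_mul]; exact bot_le⟩
  obtain ⟨x, ⟨t, ht, htx⟩, hbx⟩ :=
    (isCompactElement_iff_le_of_directed_sSup_le L b).mp hbc _ hne (Ssat_directed hS a) hba
  refine ⟨t * s, hS.2.2.2 t ht s hs, ?_⟩
  calc t * s * Ssat S a = t * (s * Ssat S a) := by rw [mul_assoc]
  _ ≤ t * b := mul_mono_right t hsb
  _ ≤ t * x := mul_mono_right t hbx
  _ ≤ a := htx

lemma Ssat_idem (hS : MultClosed S) (hN : ∀ x : L, SCompact S x) (a : L) :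
    Ssat S (Ssat S a) = Ssat S a := by
  obtain ⟨s, hs, hsa⟩ := sat_mul hS hN a
  apply le_antisymm
  · apply _root_.sSup_le; rintro x ⟨t, ht, htx⟩
    refine le_Ssat_of (hS.2.2.2 s hs t ht) ?_
    calc s * t * x = s * (t * x) := by rw [mul_assoc]
    _ ≤ s * Ssat S a := mul_mono_right s htx
    _ ≤ a := hsa
  · exact le_Ssat hS _

lemma adm_Ssat (hS : MultClosed S) (hN : ∀ x : L, SCompact S x) {a : L}
    (ha : admissible S a) : admissible S (Ssat S a) := by
  obtain ⟨s, hs, hsa⟩ := sat_mul hS hN a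
  intro t ht hta
  exact ha (s * t) (hS.2.2.2 s hs t ht) (le_trans (mul_mono_right s hta) hsa)

lemma adm_ne_top (hS : MultClosed S) {a : L} (ha : admissible S a) : a ≠ ⊤ := by
  intro h
  exact ha 1 hS.2.1 (by rw [MulLattice.one_eq_top, h])

lemma mres_sat (hS : MultClosed S) {E : L} (hE : Ssat S E = E) (b : L) :
    Ssat S (mres E b) = mres E b := by
  apply le_antisymm
  · apply _root_.sSup_le; rintro x ⟨s, hs, hsx⟩
    rw [le_mres_iff]
    have : s * (x * b) ≤ E := by
      rw [← mul_assoc]; exact le_trans (mul_mono_left hsx b) (mres_mul_le E b)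
    calc x * b ≤ Ssat S E := le_Ssat_of hs this
    _ = E := hE
  · exact le_Ssat hS _

/-! ### Compactness helpers -/

lemma compact_sup {x y : L} (hx : IsCompactElement x) (hy : IsCompactElement y) :
    IsCompactElement (x ⊔ y) := by
  rw [isCompactElement_iff_exists_le_sSup_of_le_sSup] at hx hy ⊢
  intro s hle
  obtain ⟨t₁, ht₁, hxt₁⟩ := hx s (le_trans le_sup_left hle)
  obtain ⟨t₂, ht₂, hyt₂⟩ := hy s (le_trans le_sup_right hle)
  classical
  refine ⟨t₁ ∪ t₂, ?_, ?_⟩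
  · intro z hz
    rcases Finset.mem_union.1 (by exact_mod_cast hz) with h | h
    · exact ht₁ h
    · exact ht₂ h
  · rw [Finset.sup_union]
    exact sup_le (le_trans hxt₁ le_sup_left) (le_trans hyt₂ le_sup_right)

/-! ### Well-foundedness of saturated elements -/

lemma satWF (hS : MultClosed S) (hN : ∀ x : L, SCompact S x) :
    WellFounded ((· > ·) : {E : L // Ssat S E = E} → {E : L // Ssat S E = E} → Prop) := by
  refine (wellFoundedGT_iff_monotone_chain_condition.2 ?_).wf
  intro f
  obtain ⟨s, hs, b, hbc, hsb, hbu⟩ := hN (⨆ n, (f n).1)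
  have hdir : DirectedOn (· ≤ ·) (Set.range fun n => (f n).1) := by
    rintro - ⟨i, rfl⟩ - ⟨j, rfl⟩
    exact ⟨(f (max i j)).1, ⟨max i j, rfl⟩, f.mono (le_max_left i j),
      f.mono (le_max_right i j)⟩
  obtain ⟨-, ⟨n, rfl⟩, hbn⟩ :=
    (isCompactElement_iff_le_of_directed_sSup_le L b).mp hbc (Set.range fun n => (f n).1) ⟨(f 0).1, 0, rfl⟩ hdir
      (by rwa [sSup_range])
  refine ⟨n, fun m hm => ?_⟩
  have h0 : (f n).1 ≤ (f m).1 := f.mono hm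
  apply Subtype.ext
  apply le_antisymm h0
  have : (f m).1 ≤ Ssat S (f n).1 := by
    refine le_Ssat_of hs ?_
    calc s * (f m).1 ≤ s * ⨆ k, (f k).1 := mul_mono_right s (le_iSup (fun k => (f k).1) m)
    _ ≤ b := hsb
    _ ≤ (f n).1 := hbn
  rwa [(f n).2] at this

/-! ### Radical -/

lemma compact_bot : IsCompactElement (⊥ : L) := by
  rw [isCompactElement_iff_exists_le_sSup_of_le_sSup]
  intro s _
  exact ⟨∅, by simp, by simp⟩

lemma pow_sup_le (x y : L) : ∀ i j : ℕ, (x ⊔ y) ^ (i + j) ≤ x ^ i ⊔ y ^ j := by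
  intro i
  induction i with
  | zero => intro j; simp [MulLattice.one_eq_top]
  | succ i ih =>
    intro j
    induction j with
    | zero => simp [MulLattice.one_eq_top]
    | succ j ih2 =>
      have e1 : i + 1 + (j + 1) = (i + 1 + j) + 1 := by omega
      rw [e1, pow_succ, mul_sup']
      apply sup_le
      · have h1 : (x ⊔ y) ^ (i + 1 + j) ≤ x ^ i ⊔ y ^ (j + 1) := by
          have : i + 1 + j = i + (j + 1) := by omega
          rw [this]; exact ih (j + 1)
        calc (x ⊔ y) ^ (i + 1 + j) * x ≤ (x ^ i ⊔ y ^ (j + 1)) * x := mul_mono_left h1 x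
        _ = x ^ i * x ⊔ y ^ (j + 1) * x := by rw [mul_comm, mul_sup', mul_comm x (x ^ i), mul_comm x (y ^ (j+1))]
        _ ≤ x ^ (i + 1) ⊔ y ^ (j + 1) := by
            apply sup_le
            · rw [← pow_succ]; exact le_sup_left
            · exact le_trans (mul_le_left _ _) le_sup_right
      · calc (x ⊔ y) ^ (i + 1 + j) * y ≤ (x ^ (i + 1) ⊔ y ^ j) * y := mul_mono_left ih2 y
        _ = x ^ (i + 1) * y ⊔ y ^ j * y := by rw [mul_comm, mul_sup', mul_comm y (x ^ (i+1)), mul_comm y (y ^ j)]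
        _ ≤ x ^ (i + 1) ⊔ y ^ (j + 1) := by
            apply sup_le
            · exact le_trans (mul_le_left _ _) le_sup_left
            · rw [← pow_succ]; exact le_sup_right

lemma rad_directed (a : L) :
    DirectedOn (· ≤ ·) {x : L | IsCompactElement x ∧ ∃ n : ℕ, 0 < n ∧ x ^ n ≤ a} := by
  rintro x ⟨hxc, n, hn, hxn⟩ y ⟨hyc, m, hm, hym⟩
  refine ⟨x ⊔ y, ⟨compact_sup hxc hyc, n + m, by omega, ?_⟩, le_sup_left, le_sup_right⟩
  exact le_trans (pow_sup_le x y n m) (sup_le hxn hym)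

lemma rad_nonempty (a : L) :
    ({x : L | IsCompactElement x ∧ ∃ n : ℕ, 0 < n ∧ x ^ n ≤ a}).Nonempty :=
  ⟨⊥, compact_bot, 1, by omega, by simpa using bot_le⟩

lemma le_rad_of_compact {x a : L} (hx : IsCompactElement x) {n : ℕ} (hn : 0 < n)
    (h : x ^ n ≤ a) : x ≤ rad a :=
  le_sSup ⟨hx, n, hn, h⟩

lemma le_of_forall_compact {b X : L}
    (h : ∀ z : L, IsCompactElement z → z ≤ b → z ≤ X) : b ≤ X := by
  calc b = sSup {c : L | IsCompactElement c ∧ c ≤ b} := RLattice.compactly_generated b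
  _ ≤ X := _root_.sSup_le fun z ⟨hz, hzb⟩ => h z hz hzb

lemma le_of_forall_principal {b X : L}
    (h : ∀ z : L, IsPrincipal z → z ≤ b → z ≤ X) : b ≤ X := by
  calc b = sSup {c : L | IsPrincipal c ∧ c ≤ b} := RLattice.principally_generated b
  _ ≤ X := _root_.sSup_le fun z ⟨hz, hzb⟩ => h z hz hzb

lemma exists_principal_not_le {d X : L} (h : ¬ d ≤ X) :
    ∃ m : L, IsPrincipal m ∧ m ≤ d ∧ ¬ m ≤ X := by
  by_contra h'
  push_neg at h'
  exact h (le_of_forall_principal fun z hz hzd => h' z hz hzd)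

lemma smul_rad_le {s E a : L} (h : s * E ≤ a) : s * rad E ≤ rad a := by
  rw [rad, MulLattice.mul_sSup]
  apply iSup_le; intro x; apply iSup_le; rintro ⟨hxc, n, hn, hxn⟩
  apply le_of_forall_compact
  intro z hz hzsx
  apply le_rad_of_compact hz hn
  calc z ^ n ≤ (s * x) ^ n := pow_mono hzsx n
  _ = s ^ n * x ^ n := mul_pow s x n
  _ ≤ s * x ^ n := mul_mono_left (pow_le_self s hn) _
  _ ≤ s * E := mul_mono_right s hxn
  _ ≤ a := h

lemma pow_not_le {m E : L} (hm : ¬ m ≤ Ssat S (rad E)) (hS : MultClosed S) :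
    ∀ n : ℕ, 0 < n → ¬ m ^ n ≤ E := by
  intro n hn hle
  apply hm
  refine le_trans (le_of_forall_compact fun z hz hzm => ?_) (le_Ssat hS (rad E))
  exact le_rad_of_compact hz hn (le_trans (pow_mono hzm n) hle)

lemma compact_le_rad_exists {τ Q : L} (hτ : IsCompactElement τ) (h : τ ≤ rad Q) :
    ∃ x : L, ∃ n : ℕ, 0 < n ∧ x ^ n ≤ Q ∧ τ ≤ x := by
  obtain ⟨x, ⟨_, n, hn, hxn⟩, hτx⟩ :=
    (isCompactElement_iff_le_of_directed_sSup_le L τ).mp hτ _ (rad_nonempty Q)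
      (rad_directed Q) h
  exact ⟨x, n, hn, hxn, hτx⟩

/-! ### Downward invariance of S-primariness -/

lemma primary_of_sat_primary (hS : MultClosed S) (hN : ∀ x : L, SCompact S x) {a : L}
    (ha : a ≠ ⊤) (ha' : admissible S a) (hQ : SPrimary S (Ssat S a)) : SPrimary S a := by
  obtain ⟨s₀, hs₀, hs₀a⟩ := sat_mul hS hN a
  obtain ⟨-, -, σ, hσ, hp⟩ := hQ
  refine ⟨ha, ha', s₀ * σ, hS.2.2.2 _ hs₀ _ hσ, ?_⟩
  intro c d hcd
  rcases hp c d (le_trans hcd (le_Ssat hS a)) with h | h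
  · left
    calc s₀ * σ * c = s₀ * (σ * c) := by rw [mul_assoc]
    _ ≤ s₀ * Ssat S a := mul_mono_right s₀ h
    _ ≤ a := hs₀a
  · right
    calc s₀ * σ * d = s₀ * (σ * d) := by rw [mul_assoc]
    _ ≤ s₀ * rad (Ssat S a) := mul_mono_right s₀ h
    _ ≤ rad a := smul_rad_le hs₀a

/-! ### Splitting non-primary saturated elements -/

lemma satSplit (hS : MultClosed S) (hN : ∀ x : L, SCompact S x) {E : L}
    (hE : Ssat S E = E) (hadm : admissible S E) (hnp : ¬ SPrimary S E) :
    ∃ E₁ E₂ : L, Ssat S E₁ = E₁ ∧ admissible S E₁ ∧ E < E₁ ∧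
      Ssat S E₂ = E₂ ∧ admissible S E₂ ∧ E < E₂ ∧ E = E₁ ⊓ E₂ := by
  classical
  obtain ⟨s_r, hsr, hsrr⟩ := sat_mul hS hN (rad E)
  have hwit : ¬ ∀ c d : L, c * d ≤ E → s_r * c ≤ E ∨ s_r * d ≤ rad E :=
    fun h => hnp ⟨adm_ne_top hS hadm, hadm, s_r, hsr, h⟩
  push_neg at hwit
  obtain ⟨c, d, hcd, hc, hd⟩ := hwit
  have hcE : ¬ c ≤ E := fun hcE => hc (le_trans (mul_le_right s_r c) hcE)
  have hdS : ¬ d ≤ Ssat S (rad E) :=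
    fun hdS => hd (le_trans (mul_mono_right s_r hdS) hsrr)
  obtain ⟨m, hmP, hmd, hm⟩ := exists_principal_not_le hdS
  have hpow : ∀ n : ℕ, 0 < n → ¬ m ^ n ≤ E := pow_not_le hm hS
  have hcm : ∀ k : ℕ, c * m ^ (k + 1) ≤ E := by
    intro k
    have e1 : m ^ (k+1) = m * m ^ k := by rw [pow_succ, mul_comm]
    rw [e1, ← mul_assoc]
    calc c * m * m ^ k ≤ E * m ^ k :=
      mul_mono_left (le_trans (mul_mono_right c hmd) hcd) _
    _ ≤ E := mul_le_left E _
  -- the ascending chain of residuals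
  have fmono : Monotone fun n : ℕ =>
      (⟨mres E (m ^ (n+1)), mres_sat hS hE _⟩ : {E' : L // Ssat S E' = E'}) := by
    intro n n' hnn'
    show mres E (m ^ (n+1)) ≤ mres E (m ^ (n'+1))
    rw [le_mres_iff]
    obtain ⟨k, hk⟩ : ∃ k, n' + 1 = (n+1) + k := ⟨n' - n, by omega⟩
    have e2 : m ^ (n' + 1) = m ^ (n+1) * m ^ k := by rw [hk, pow_add]
    rw [e2, ← mul_assoc]
    calc mres E (m ^ (n+1)) * m ^ (n+1) * m ^ k ≤ E * m ^ k :=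
      mul_mono_left (mres_mul_le E _) _
    _ ≤ E := mul_le_left E _
  obtain ⟨n₀, hstab⟩ := (wellFoundedGT_iff_monotone_chain_condition.1 ⟨satWF hS hN⟩)
    ⟨_, fmono⟩
  set N := n₀ + 1 with hN'
  have key : mres E (m ^ (N + N)) = mres E (m ^ N) := by
    have h2 := congrArg Subtype.val (hstab (2*n₀+1) (by omega))
    have e : 2*n₀+1+1 = N + N := by omega
    simp only [OrderHom.coe_mk] at h2
    rw [e] at h2
    exact h2.symm
  set E₂ := mres E (m ^ N) with hE₂def
  set E₁ := Ssat S (E ⊔ m ^ N) with hE₁def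
  have hEE₂ : E ≤ E₂ := le_mres_self E _
  have hE₂m : E₂ * m ^ N ≤ E := mres_mul_le E _
  have hmeet : m ^ N ⊓ E₂ ≤ E := by
    have hmp : IsMeetPrincipal (m ^ N) := mp_pow hmP.1 N
    have h1 := hmp E₂ ⊤
    rw [mul_top', inf_top_eq] at h1
    have h2 : mres E₂ (m ^ N) = E₂ := by
      rw [hE₂def, mres_mres, ← pow_add, key]
    rw [inf_comm, h1, h2, mul_comm]
    exact hE₂m
  have hsplit : E = E₁ ⊓ E₂ := by
    apply le_antisymm
    · exact le_inf (le_trans le_sup_left (le_Ssat hS _)) hEE₂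
    · obtain ⟨σ₁, hσ₁, hσ₁E⟩ := sat_mul hS hN (E ⊔ m ^ N)
      have h1 : σ₁ * (E₁ ⊓ E₂) ≤ (E ⊔ m ^ N) ⊓ E₂ :=
        le_inf (le_trans (mul_mono_right _ inf_le_left) hσ₁E)
          (le_trans (mul_le_right _ _) inf_le_right)
      have h2 : (E ⊔ m ^ N) ⊓ E₂ = E ⊔ (m ^ N ⊓ E₂) :=
        (RLattice.modular E (m ^ N) E₂ hEE₂).symm
      have h3 : σ₁ * (E₁ ⊓ E₂) ≤ E := by
        refine le_trans h1 ?_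
        rw [h2]
        exact sup_le le_rfl hmeet
      calc E₁ ⊓ E₂ ≤ Ssat S E := le_Ssat_of hσ₁ h3
      _ = E := hE
  have hE₁ne : E ≠ E₁ := by
    intro h
    exact hpow N (by omega) (le_trans (le_trans le_sup_right (le_Ssat hS _)) h.symm.le)
  have hE₂ne : E ≠ E₂ := by
    intro h
    exact hcE (le_trans (le_mres_iff.2 (hcm n₀)) h.symm.le)
  have hadm₂ : admissible S E₂ := by
    intro t ht htE₂
    refine hpow N (by omega) ?_
    have h1 : t * m ^ N ≤ E := le_mres_iff.1 htE₂
    calc m ^ N ≤ Ssat S E := le_Ssat_of ht h1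
    _ = E := hE
  have hadm₁ : admissible S E₁ := by
    intro t ht htE₁
    obtain ⟨σ₁, hσ₁, hσ₁E⟩ := sat_mul hS hN (E ⊔ m ^ N)
    have h1 : σ₁ * t ≤ E ⊔ m ^ N := le_trans (mul_mono_right σ₁ htE₁) hσ₁E
    have h2 : (σ₁ * t) * E₂ ≤ E := by
      calc (σ₁ * t) * E₂ ≤ (E ⊔ m ^ N) * E₂ := mul_mono_left h1 E₂
      _ = E * E₂ ⊔ m ^ N * E₂ := by
          rw [mul_comm, mul_sup', mul_comm E₂ E, mul_comm E₂ (m ^ N)]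
      _ ≤ E := sup_le (mul_le_left E _) (by rw [mul_comm]; exact hE₂m)
    have h3 : E₂ ≤ E := by
      calc E₂ ≤ Ssat S E := le_Ssat_of (hS.2.2.2 σ₁ hσ₁ t ht) h2
      _ = E := hE
    exact hE₂ne (le_antisymm hEE₂ h3)
  refine ⟨E₁, E₂, Ssat_idem hS hN _, hadm₁, lt_of_le_of_ne ?_ hE₁ne,
    mres_sat hS hE _, hadm₂, lt_of_le_of_ne hEE₂ hE₂ne, hsplit⟩
  exact le_trans le_sup_left (le_Ssat hS _)

/-! ### Decomposition of saturated elements -/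

variable (S)

def SatList (l : List L) : Prop := ∀ Q ∈ l, Ssat S Q = Q ∧ SPrimary S Q

def SIrr2 (a : L) : Prop :=
  ∀ b c : L, a = b ⊓ c → (∃ s ∈ S, s * b ≤ a) ∨ (∃ s ∈ S, s * c ≤ a)

variable {S}

lemma foldr_inf_append (l₁ l₂ : List L) :
    (l₁ ++ l₂).foldr (· ⊓ ·) ⊤ = l₁.foldr (· ⊓ ·) ⊤ ⊓ l₂.foldr (· ⊓ ·) ⊤ := by
  induction l₁ with
  | nil => simp
  | cons x l ih => simp [ih, inf_assoc]

lemma pow_mem_S (hS : MultClosed S) {s : L} (hs : s ∈ S) :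
    ∀ n : ℕ, 0 < n → s ^ n ∈ S := by
  intro n
  induction n with
  | zero => omega
  | succ k ih =>
    intro _
    rcases Nat.eq_zero_or_pos k with h | h
    · subst h; simpa using hs
    · rw [pow_succ]; exact hS.2.2.2 _ (ih h) _ hs

lemma satDec (hS : MultClosed S) (hN : ∀ x : L, SCompact S x) :
    ∀ X : {E' : L // Ssat S E' = E'}, admissible S X.1 →
      ∃ l : List L, SatList S l ∧ X.1 = l.foldr (· ⊓ ·) ⊤ := by
  intro X
  refine WellFounded.induction (satWF hS hN)
    (C := fun X : {E' : L // Ssat S E' = E'} => admissible S X.1 →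
      ∃ l : List L, SatList S l ∧ X.1 = l.foldr (· ⊓ ·) ⊤) X ?_
  rintro ⟨E, hE⟩ ih hadm
  by_cases hp : SPrimary S E
  · refine ⟨[E], ?_, by simp⟩
    intro Q hQ
    simp only [List.mem_singleton] at hQ
    subst hQ
    exact ⟨hE, hp⟩
  · obtain ⟨E₁, E₂, h₁s, h₁a, h₁lt, h₂s, h₂a, h₂lt, hsp⟩ := satSplit hS hN hE hadm hp
    obtain ⟨l₁, hl₁, hl₁e⟩ := ih ⟨E₁, h₁s⟩ (Subtype.mk_lt_mk.2 h₁lt) h₁a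
    obtain ⟨l₂, hl₂, hl₂e⟩ := ih ⟨E₂, h₂s⟩ (Subtype.mk_lt_mk.2 h₂lt) h₂a
    refine ⟨l₁ ++ l₂, ?_, ?_⟩
    · intro Q hQ
      rcases List.mem_append.1 hQ with h | h
      · exact hl₁ Q h
      · exact hl₂ Q h
    · rw [foldr_inf_append, ← hl₁e, ← hl₂e]
      exact hsp

/-! ### S-irreducible elements are S-primary -/

lemma sat_primary_of_sirr2 (hS : MultClosed S) (hN : ∀ x : L, SCompact S x) {a : L}
    (hadm : admissible S a) (hsirr : SIrr2 S a) :
    ∀ l : List L, SatList S l → Ssat S a = l.foldr (· ⊓ ·) ⊤ →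
      SPrimary S (Ssat S a) := by
  intro l
  induction l with
  | nil =>
    intro _ hfold
    exfalso
    simp only [List.foldr_nil] at hfold
    exact adm_Ssat hS hN hadm 1 hS.2.1 (by rw [MulLattice.one_eq_top, hfold])
  | cons Q₀ tail ih =>
    intro hlist hfold
    simp only [List.foldr_cons] at hfold
    set y := tail.foldr (· ⊓ ·) ⊤ with hy
    have hQ₀ := hlist Q₀ (by simp)
    have hsata : Ssat S a ≤ Q₀ := by rw [hfold]; exact inf_le_left
    by_cases hyQ : y ≤ Q₀
    · refine ih (fun Q hQ => hlist Q (by simp [hQ])) ?_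
      rw [hfold]
      exact inf_eq_right.2 hyQ
    by_cases hQE : Q₀ ≤ Ssat S a
    · have hEq : Ssat S a = Q₀ := le_antisymm hsata hQE
      rw [hEq]
      exact hQ₀.2
    · exfalso
      obtain ⟨s₀, hs₀, hs₀a⟩ := sat_mul hS hN a
      obtain ⟨σr, hσr, hσrr⟩ := sat_mul hS hN (rad Q₀)
      have hall : s₀ ≤ Ssat S (rad Q₀) := by
        apply le_of_forall_principal
        intro p hp hps₀
        by_cases hcase : mres Q₀ p ≤ Q₀
        · exfalso
          have hmres : mres Q₀ p = Q₀ := le_antisymm hcase (le_mres_self Q₀ p)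
          have hmeet : p * y ⊓ Q₀ ≤ a := by
            have h1 := hp.1 Q₀ y
            rw [inf_comm, h1, hmres]
            calc p * (Q₀ ⊓ y) ≤ s₀ * (Q₀ ⊓ y) := mul_mono_left hps₀ _
            _ = s₀ * Ssat S a := by rw [← hfold]
            _ ≤ a := hs₀a
          have hsplit : a = Q₀ ⊓ (a ⊔ p * y) := by
            have hmod := RLattice.modular a (p * y) Q₀ (le_trans (le_Ssat hS a) hsata)
            rw [inf_comm, ← hmod, sup_eq_left.2 hmeet]
          rcases hsirr _ _ hsplit with ⟨s, hsS, hle⟩ | ⟨s, hsS, hle⟩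
          · exact hQE (le_Ssat_of hsS hle)
          · have h2 : p * y ≤ Q₀ :=
              le_trans (le_trans le_sup_right (le_Ssat_of hsS hle)) hsata
            refine hyQ ?_
            rw [← hmres]
            exact le_mres_iff.2 (by rwa [mul_comm] at h2)
        · have hz : mres Q₀ p * p ≤ Q₀ := mres_mul_le Q₀ p
          obtain ⟨σ₀, hσ₀, hprim⟩ := hQ₀.2.2.2
          rcases hprim (mres Q₀ p) p hz with h | h
          · exact absurd (le_trans (le_Ssat_of hσ₀ h) (le_of_eq hQ₀.1)) hcase
          · exact le_Ssat_of hσ₀ h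
      have hτ : σr * s₀ ≤ rad Q₀ := le_trans (mul_mono_right σr hall) hσrr
      have hτS : σr * s₀ ∈ S := hS.2.2.2 σr hσr s₀ hs₀
      obtain ⟨x, n, hn, hxn, hτx⟩ := compact_le_rad_exists (hS.1 _ hτS) hτ
      exact hQ₀.2.2.1 _ (pow_mem_S hS hτS n hn) (le_trans (pow_mono hτx n) hxn)

/-! ### List-to-Fin conversion -/

lemma foldr_eq_iInf : ∀ l : List L, l.foldr (· ⊓ ·) ⊤ = ⨅ i : Fin l.length, l.get i := by
  intro l
  induction l with
  | nil =>
    have : IsEmpty (Fin ([] : List L).length) := by simp; infer_instance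
    exact (iInf_of_empty _).symm
  | cons x l ih =>
    simp only [List.foldr_cons]
    apply le_antisymm
    · apply le_iInf
      rintro ⟨i, hi⟩
      match i, hi with
      | 0, _ => exact inf_le_left
      | (j+1), hj =>
        refine le_trans inf_le_right ?_
        rw [ih]
        refine le_trans (iInf_le _ ⟨j, by simpa using hj⟩) (le_of_eq ?_)
        simp [List.get]
    · apply le_inf
      · exact le_trans (iInf_le _ ⟨0, by simp⟩) (le_of_eq (by simp))
      · rw [ih]
        apply le_iInf
        rintro ⟨j, hj⟩
        refine le_trans (iInf_le _ ⟨j+1, by simpa using hj⟩) (le_of_eq ?_)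
        simp [List.get]

end Stmt17

/-- Existence of S-primary decomposition in an S-Noetherian r-lattice. -/
theorem stmt17 {L : Type*} [RLattice L] (S : Set L) (hS : MultClosed S)
    (hN : ∀ x : L, SCompact S x) (a : L) (ha : a ≠ ⊤)
    (ha' : ∀ t ∈ S, ¬ t ≤ a) :
    ∃ n : ℕ, ∃ q : Fin n → L, (∀ i, SPrimary S (q i)) ∧ a = ⨅ i, q i := by
  classical
  have main : ∀ X : {E' : L // Ssat S E' = E'}, ∀ b : L, b ≠ ⊤ →
      Stmt17.admissible S b → Ssat S b = X.1 →
      ∃ l : List L, (∀ q ∈ l, SPrimary S q) ∧ b = l.foldr (· ⊓ ·) ⊤ := by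
    intro X
    refine WellFounded.induction (Stmt17.satWF hS hN)
      (C := fun X : {E' : L // Ssat S E' = E'} => ∀ b : L, b ≠ ⊤ →
        Stmt17.admissible S b → Ssat S b = X.1 →
        ∃ l : List L, (∀ q ∈ l, SPrimary S q) ∧ b = l.foldr (· ⊓ ·) ⊤) X ?_
    rintro ⟨E, hE⟩ ih b hb hbadm hbE
    by_cases hsirr : Stmt17.SIrr2 S b
    · -- b is S-irreducible, hence S-primary
      obtain ⟨l, hl, hle⟩ := Stmt17.satDec hS hN ⟨Ssat S b, Stmt17.Ssat_idem hS hN b⟩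
        (Stmt17.adm_Ssat hS hN hbadm)
      have hQ : SPrimary S (Ssat S b) :=
        Stmt17.sat_primary_of_sirr2 hS hN hbadm hsirr l hl hle
      have hbp : SPrimary S b := Stmt17.primary_of_sat_primary hS hN hb hbadm hQ
      refine ⟨[b], ?_, by simp⟩
      intro q hq
      simp only [List.mem_singleton] at hq
      subst hq
      exact hbp
    · -- b splits exactly
      have hnot : ∃ b₁ c₁ : L, b = b₁ ⊓ c₁ ∧ (∀ s ∈ S, ¬ s * b₁ ≤ b) ∧
          (∀ s ∈ S, ¬ s * c₁ ≤ b) := by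
        by_contra h
        push_neg at h
        refine hsirr fun b₁ c₁ hbc => ?_
        by_cases h1 : ∃ s ∈ S, s * b₁ ≤ b
        · exact Or.inl h1
        · refine Or.inr (h b₁ c₁ hbc ?_)
          push_neg at h1
          exact h1
      obtain ⟨b₁, c₁, hbc, hnb, hnc⟩ := hnot
      obtain ⟨s₀, hs₀, hs₀b⟩ := Stmt17.sat_mul hS hN b
      have hbb₁ : b ≤ b₁ := by rw [hbc]; exact inf_le_left
      have hbc₁ : b ≤ c₁ := by rw [hbc]; exact inf_le_right
      have hadm₁ : Stmt17.admissible S b₁ := by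
        intro t ht htb₁
        refine hnc t ht ?_
        rw [hbc]
        exact le_inf (le_trans (Stmt17.mul_le_left t c₁) htb₁) (Stmt17.mul_le_right t c₁)
      have hadm₂ : Stmt17.admissible S c₁ := by
        intro t ht htc₁
        refine hnb t ht ?_
        rw [hbc]
        exact le_inf (Stmt17.mul_le_right t b₁) (le_trans (Stmt17.mul_le_left t b₁) htc₁)
      have hlt₁ : Ssat S b < Ssat S b₁ := by
        refine lt_of_le_of_ne (Stmt17.Ssat_mono hbb₁) ?_
        intro h
        exact hnb s₀ hs₀ (le_trans (Stmt17.mul_mono_right s₀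
          (le_trans (Stmt17.le_Ssat hS b₁) (h.symm.le))) hs₀b)
      have hlt₂ : Ssat S b < Ssat S c₁ := by
        refine lt_of_le_of_ne (Stmt17.Ssat_mono hbc₁) ?_
        intro h
        exact hnc s₀ hs₀ (le_trans (Stmt17.mul_mono_right s₀
          (le_trans (Stmt17.le_Ssat hS c₁) (h.symm.le))) hs₀b)
      have hbE' : Ssat S b = E := hbE
      obtain ⟨l₁, hl₁, hl₁e⟩ := ih ⟨Ssat S b₁, Stmt17.Ssat_idem hS hN b₁⟩
        (Subtype.mk_lt_mk.2 (hbE' ▸ hlt₁)) b₁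
        (Stmt17.adm_ne_top hS hadm₁) hadm₁ rfl
      obtain ⟨l₂, hl₂, hl₂e⟩ := ih ⟨Ssat S c₁, Stmt17.Ssat_idem hS hN c₁⟩
        (Subtype.mk_lt_mk.2 (hbE' ▸ hlt₂)) c₁
        (Stmt17.adm_ne_top hS hadm₂) hadm₂ rfl
      refine ⟨l₁ ++ l₂, ?_, ?_⟩
      · intro q hq
        rcases List.mem_append.1 hq with h | h
        · exact hl₁ q h
        · exact hl₂ q h
      · rw [Stmt17.foldr_inf_append, ← hl₁e, ← hl₂e]
        exact hbc
  obtain ⟨l, hl, hle⟩ := main ⟨Ssat S a, Stmt17.Ssat_idem hS hN a⟩ a ha ha' rfl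
  refine ⟨l.length, fun i => l.get i, fun i => hl _ (l.get_mem i), ?_⟩
  rw [hle, Stmt17.foldr_eq_iInf]
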